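/- arXiv:1905.13423 — 4 statements merged into one kernel-verified Lean document; each statement's English description precedes it below -/
import Mathlib

section
/- Let s > 0, I_L > 0, and define π_F(I_F) = (1/(9 I_L^2) - s) I_F^2 + (2/(9 I_L)) I_F + 1/9 on the domain [0, I_L]. Then π_F attains its maximum on [0, I_L] uniquely at I_F* = I_L/(9 I_L^2 s - 1) if I_L > √(2/(9s)), and at I_F* = I_L if 0 < I_L ≤ √(2/(9s)). -/
open Set

theorem stmt6 (s IL : ℝ) (hs : 0 < s) (hIL : 0 < IL)
    (πF : ℝ → ℝ)
    (hπ : ∀ x, πF x = (1 / (9 * IL ^ 2) - s) * x ^ 2 + (2 / (9 * IL)) * x + 1 / 9) :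
    (IL > Real.sqrt (2 / (9 * s)) →
      IsMaxOn πF (Icc 0 IL) (IL / (9 * IL ^ 2 * s - 1)) ∧
      ∀ x ∈ Icc (0 : ℝ) IL, πF x = πF (IL / (9 * IL ^ 2 * s - 1)) →
        x = IL / (9 * IL ^ 2 * s - 1)) ∧
    (IL ≤ Real.sqrt (2 / (9 * s)) →
      IsMaxOn πF (Icc 0 IL) IL ∧
      ∀ x ∈ Icc (0 : ℝ) IL, πF x = πF IL → x = IL) := by
  have hIL2 : (0:ℝ) < 9 * IL ^ 2 := by positivity
  constructor
  · intro h
    have h2 : 2 / (9 * s) < IL ^ 2 := (Real.sqrt_lt' hIL).mp h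
    have h2' : 2 < 9 * IL ^ 2 * s := by
      rw [div_lt_iff₀ (by positivity)] at h2; nlinarith
    have hd : (0:ℝ) < 9 * IL ^ 2 * s - 1 := by linarith
    set c := IL / (9 * IL ^ 2 * s - 1) with hc
    have key : ∀ x, πF c - πF x = (s - 1 / (9 * IL ^ 2)) * (x - c) ^ 2 := by
      intro x
      rw [hπ, hπ, hc]
      field_simp
      ring
    have hs' : 0 < s - 1 / (9 * IL ^ 2) := by
      rw [sub_pos, div_lt_iff₀ hIL2]; nlinarith
    constructor
    · intro x _
      simp only [mem_setOf_eq]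
      nlinarith [key x, sq_nonneg (x - c), hs'.le]
    · intro x _ hxe
      have hk := key x
      rw [hxe, sub_self] at hk
      have h0 : (x - c) ^ 2 = 0 := by
        rcases mul_eq_zero.mp hk.symm with h' | h'
        · exact absurd h' hs'.ne'
        · exact h'
      have := pow_eq_zero_iff (n := 2) (by norm_num) |>.mp h0
      linarith [this]
  · intro h
    have h2 : IL ^ 2 ≤ 2 / (9 * s) := by { rw [Real.le_sqrt hIL.le (by positivity)] at h; exact h }
    have h2' : 9 * IL ^ 2 * s ≤ 2 := by
      rw [le_div_iff₀ (by positivity)] at h2; nlinarith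
    have key : ∀ x, πF IL - πF x =
        (IL - x) * ((1 / (9 * IL ^ 2) - s) * (IL + x) + 2 / (9 * IL)) := by
      intro x
      rw [hπ, hπ]
      field_simp
      ring
    have hF : ∀ x, 0 ≤ x → x ≤ IL →
        0 ≤ (1 / (9 * IL ^ 2) - s) * (IL + x) + 2 / (9 * IL) := by
      intro x hx0 hx1
      have h9 : (1 / (9 * IL ^ 2) - s) * (IL + x) + 2 / (9 * IL)
          = ((1 - 9 * IL ^ 2 * s) * (IL + x) + 2 * IL) / (9 * IL ^ 2) := by
        field_simp
      rw [h9]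
      apply div_nonneg _ hIL2.le
      nlinarith [mul_nonneg (by linarith : (0:ℝ) ≤ 2 - 9 * IL ^ 2 * s) (by linarith : (0:ℝ) ≤ IL + x)]
    constructor
    · intro x hx
      simp only [mem_setOf_eq]
      have := mul_nonneg (by linarith [hx.2] : (0:ℝ) ≤ IL - x) (hF x hx.1 hx.2)
      linarith [key x, this]
    · intro x hx hxe
      by_contra hne
      have hxlt : x < IL := lt_of_le_of_ne hx.2 hne
      have hk := key x
      rw [hxe, sub_self] at hk
      have hFpos : 0 < (1 / (9 * IL ^ 2) - s) * (IL + x) + 2 / (9 * IL) := by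
        have h9 : (1 / (9 * IL ^ 2) - s) * (IL + x) + 2 / (9 * IL)
            = ((1 - 9 * IL ^ 2 * s) * (IL + x) + 2 * IL) / (9 * IL ^ 2) := by
          field_simp
        rw [h9]
        apply div_pos _ hIL2
        nlinarith [mul_nonneg (by linarith : (0:ℝ) ≤ 2 - 9 * IL ^ 2 * s) (by linarith [hx.1] : (0:ℝ) ≤ IL + x)]
      have := mul_pos (by linarith : (0:ℝ) < IL - x) hFpos
      linarith
end

section
/- Let -1 < Δ < 1, s > 0, I_L > 0, and define π_F(I_F) = (1/(9 I_L^2) - s) I_F^2 + (2(1-Δ)/(9 I_L)) I_F + (1-Δ)^2/9 on [0, I_L]. Then π_F attains its maximum on [0, I_L] at I_F* = (1-Δ) I_L/(9 I_L^2 s - 1) if I_L > √((2-Δ)/(9s)), and at I_F* = I_L if 0 < I_L ≤ √((2-Δ)/(9s)). -/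
open Set

theorem stmt7 (Δ s IL : ℝ) (hΔ1 : -1 < Δ) (hΔ2 : Δ < 1) (hs : 0 < s) (hIL : 0 < IL)
    (πF : ℝ → ℝ)
    (hπ : ∀ x, πF x = (1 / (9 * IL ^ 2) - s) * x ^ 2
        + (2 * (1 - Δ) / (9 * IL)) * x + (1 - Δ) ^ 2 / 9) :
    (IL > Real.sqrt ((2 - Δ) / (9 * s)) →
      IsMaxOn πF (Icc 0 IL) ((1 - Δ) * IL / (9 * IL ^ 2 * s - 1))) ∧
    (IL ≤ Real.sqrt ((2 - Δ) / (9 * s)) →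
      IsMaxOn πF (Icc 0 IL) IL) := by
  have h2 : (0:ℝ) < 2 - Δ := by linarith
  have hIL2 : (0:ℝ) < IL ^ 2 := by positivity
  have hILne : IL ≠ 0 := ne_of_gt hIL
  constructor
  · intro h
    have hsq : (2 - Δ) / (9 * s) < IL ^ 2 := (Real.sqrt_lt' hIL).mp h
    have h1 : 2 - Δ < 9 * s * IL ^ 2 := by
      rw [div_lt_iff₀ (by linarith)] at hsq; linarith
    have hden : (0:ℝ) < 9 * IL ^ 2 * s - 1 := by nlinarith
    set c := (1 - Δ) * IL / (9 * IL ^ 2 * s - 1) with hc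
    intro x hx
    simp only [mem_Icc] at hx
    simp only [mem_setOf_eq]
    have key : πF c - πF x = (s - 1 / (9 * IL ^ 2)) * (x - c) ^ 2 := by
      simp only [hπ, hc]
      field_simp
      ring
    have ha : 0 ≤ s - 1 / (9 * IL ^ 2) := by
      rw [sub_nonneg, div_le_iff₀ (by positivity)]; nlinarith
    nlinarith [mul_nonneg ha (sq_nonneg (x - c))]
  · intro h
    have hsq : IL ^ 2 ≤ (2 - Δ) / (9 * s) :=
      (Real.le_sqrt hIL.le (by positivity)).mp h
    have h1 : 9 * s * IL ^ 2 ≤ 2 - Δ := by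
      rw [le_div_iff₀ (by linarith)] at hsq; linarith
    intro x hx
    simp only [mem_Icc] at hx
    simp only [mem_setOf_eq]
    have key : πF IL - πF x
        = ((IL + x) * (2 - Δ - 9 * s * IL ^ 2) + (1 - Δ) * (IL - x)) * (IL - x) / (9 * IL ^ 2) := by
      simp only [hπ]
      field_simp
      ring
    have hnum : 0 ≤ ((IL + x) * (2 - Δ - 9 * s * IL ^ 2) + (1 - Δ) * (IL - x)) * (IL - x) := by
      have h3 : 0 ≤ IL - x := by linarith [hx.2]
      have h4 : 0 ≤ IL + x := by linarith [hx.1]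
      nlinarith [mul_nonneg h4 (by linarith : (0:ℝ) ≤ 2 - Δ - 9 * s * IL ^ 2),
        mul_nonneg (by linarith : (0:ℝ) ≤ 1 - Δ) h3]
    have := div_nonneg hnum (by positivity : (0:ℝ) ≤ 9 * IL ^ 2)
    linarith [key ▸ this]
end

section
/- Let s > γ > 0 and 0 < δ ≤ 1/√(2s). Consider π_L(I_L) = s·(I_F*(I_L))^2 − γ I_L^2 where I_F*(I_L) = I_L for I_L ∈ [δ, 1/√(2s)] and I_F*(I_L) = 1/(2 s I_L) for I_L > 1/√(2s). Then the supremum of π_L over [δ, ∞) equals (s−γ)/(2s) and is attained uniquely at I_L = 1/√(2s). -/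
open Set

theorem stmt14 (s γ δ : ℝ) (hsγ : γ < s) (hγ : 0 < γ)
    (hδ : 0 < δ) (hδ2 : δ ≤ 1 / Real.sqrt (2 * s))
    (F πL : ℝ → ℝ)
    (hF : ∀ I, F I = if I ≤ 1 / Real.sqrt (2 * s) then I else 1 / (2 * s * I))
    (hπ : ∀ I, πL I = s * (F I) ^ 2 - γ * I ^ 2) :
    IsGreatest (πL '' Ici δ) ((s - γ) / (2 * s)) ∧
    πL (1 / Real.sqrt (2 * s)) = (s - γ) / (2 * s) ∧
    (∀ I ∈ Ici δ, πL I = (s - γ) / (2 * s) → I = 1 / Real.sqrt (2 * s)) := by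
  have hs : 0 < s := hγ.trans hsγ
  have h2s : 0 < 2 * s := by linarith
  set c := 1 / Real.sqrt (2 * s) with hcdef
  have hsq : 0 < Real.sqrt (2 * s) := Real.sqrt_pos.mpr h2s
  have hc : 0 < c := by positivity
  have hc2 : c ^ 2 = 1 / (2 * s) := by
    rw [hcdef, div_pow, one_pow, Real.sq_sqrt h2s.le]
  have hVc : πL c = (s - γ) / (2 * s) := by
    rw [hπ, hF, if_pos le_rfl, hc2]
    field_simp
  have key : ∀ I, δ ≤ I → πL I ≤ (s - γ) / (2 * s) ∧
      (πL I = (s - γ) / (2 * s) → I = c) := by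
    intro I hI
    have hI0 : 0 < I := lt_of_lt_of_le hδ hI
    by_cases h : I ≤ c
    · have hπI : πL I = (s - γ) * I ^ 2 := by rw [hπ, hF, if_pos h]; ring
      have hV : (s - γ) * c ^ 2 = (s - γ) / (2 * s) := by rw [hc2]; ring
      have hI2 : I ^ 2 ≤ c ^ 2 := by
        nlinarith [mul_nonneg (sub_nonneg.mpr h) (by linarith : (0:ℝ) ≤ I + c)]
      have hle : (s - γ) * I ^ 2 ≤ (s - γ) * c ^ 2 :=
        mul_le_mul_of_nonneg_left hI2 (by linarith)
      constructor
      · rw [hπI, ← hV]; exact hle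
      · intro hEq
        rw [hπI, ← hV] at hEq
        have hI2 : I ^ 2 = c ^ 2 :=
          mul_left_cancel₀ (by intro h'; linarith [sub_eq_zero.mp h'] : s - γ ≠ 0) hEq
        have h3 : (I - c) * (I + c) = 0 := by nlinarith
        rcases mul_eq_zero.mp h3 with h4 | h4
        · linarith
        · linarith
    · push_neg at h
      have hπI : πL I = 1 / (4 * s * I ^ 2) - γ * I ^ 2 := by
        rw [hπ, hF, if_neg (not_le.mpr h)]
        field_simp
        ring
      have h1 : 1 / (4 * s * I ^ 2) < 1 / (4 * s * c ^ 2) := by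
        apply one_div_lt_one_div_of_lt (by positivity)
        nlinarith [mul_pos (mul_pos (by linarith : (0:ℝ) < I - c) (by linarith : (0:ℝ) < I + c)) hs]
      have h2 : γ * c ^ 2 < γ * I ^ 2 := by
        nlinarith [mul_pos (mul_pos (by linarith : (0:ℝ) < I - c) (by linarith : (0:ℝ) < I + c)) hγ]
      have hV : 1 / (4 * s * c ^ 2) - γ * c ^ 2 = (s - γ) / (2 * s) := by
        rw [hc2]; field_simp; ring
      have hlt : πL I < (s - γ) / (2 * s) := by rw [hπI, ← hV]; linarith
      exact ⟨hlt.le, fun hEq => absurd hEq hlt.ne⟩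
  refine ⟨⟨⟨c, hδ2, hVc⟩, ?_⟩, hVc, ?_⟩
  · rintro y ⟨I, hI, rfl⟩
    exact (key I hI).1
  · intro I hI hEq
    exact (key I hI).2 hEq
end

section
/- Let t > 0, s > 0, I_L > 0, and define π_F(I_F) = (tπ^2/(36 I_L^2) − 2s) I_F^2 + (5tπ^2/(18 I_L)) I_F + 25tπ^2/36 on [0, I_L]. Then π_F attains its maximum at I_F* = 5tπ^2 I_L/(72 I_L^2 s − tπ^2) if I_L ≥ (π/2)√(t/(3s)), and at I_F* = I_L if 0 < I_L < (π/2)√(t/(3s)). -/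
open Set Real

theorem stmt15 (t s IL : ℝ) (ht : 0 < t) (hs : 0 < s) (hIL : 0 < IL)
    (πF : ℝ → ℝ)
    (hπ : ∀ x, πF x = (t * π ^ 2 / (36 * IL ^ 2) - 2 * s) * x ^ 2
        + (5 * t * π ^ 2 / (18 * IL)) * x + 25 * t * π ^ 2 / 36) :
    (IL ≥ (π / 2) * Real.sqrt (t / (3 * s)) →
      IsMaxOn πF (Icc 0 IL) (5 * t * π ^ 2 * IL / (72 * IL ^ 2 * s - t * π ^ 2))) ∧
    (IL < (π / 2) * Real.sqrt (t / (3 * s)) → IsMaxOn πF (Icc 0 IL) IL) := by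
  have hπ0 : 0 < π := Real.pi_pos
  have hsq : Real.sqrt (t / (3 * s)) ^ 2 = t / (3 * s) := Real.sq_sqrt (by positivity)
  set u := t * π ^ 2 / (36 * IL ^ 2) with hudef
  have hu : u * (36 * IL ^ 2) = t * π ^ 2 := div_mul_cancel₀ _ (by positivity)
  have hu0 : 0 < u := by rw [hudef]; positivity
  have hform : ∀ z, πF z = (u - 2 * s) * z ^ 2 + 10 * IL * u * z + 25 * IL ^ 2 * u := by
    intro z
    rw [hπ z, hudef]
    field_simp
    ring
  constructor
  · intro h
    have h1 : ((π / 2) * Real.sqrt (t / (3 * s))) ^ 2 ≤ IL ^ 2 :=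
      pow_le_pow_left₀ (by positivity) h 2
    rw [mul_pow, hsq] at h1
    have h1' : (π / 2) ^ 2 * (t / (3 * s)) * (3 * s) ≤ IL ^ 2 * (3 * s) :=
      mul_le_mul_of_nonneg_right h1 (by positivity)
    have heq : (π / 2) ^ 2 * (t / (3 * s)) * (3 * s) = t * π ^ 2 / 4 := by
      field_simp; ring
    rw [heq] at h1'
    have h12 : t * π ^ 2 ≤ 12 * s * IL ^ 2 := by linarith
    have hD : 0 < 72 * IL ^ 2 * s - t * π ^ 2 := by nlinarith [mul_pos ht (pow_pos hπ0 2)]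
    set v := 5 * t * π ^ 2 * IL / (72 * IL ^ 2 * s - t * π ^ 2) with hvdef
    have hv : v * (72 * IL ^ 2 * s - t * π ^ 2) = 5 * t * π ^ 2 * IL :=
      div_mul_cancel₀ _ hD.ne'
    have hv2 : v * (2 * s - u) = 5 * u * IL := by
      have h36 : (36 * IL ^ 2 : ℝ) ≠ 0 := by positivity
      apply mul_right_cancel₀ h36
      linear_combination hv - (v + 5 * IL) * hu
    have h3u : 3 * u ≤ s := by nlinarith [pow_pos hIL 2]
    have hB10 : 10 * IL * u = 2 * (2 * s - u) * v := by linear_combination -2 * hv2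
    intro y hy
    show πF y ≤ πF v
    rw [hform y, hform v, hB10]
    nlinarith [mul_nonneg (by linarith : (0:ℝ) ≤ 2 * s - u) (sq_nonneg (v - y))]
  · intro h
    have h1 : IL ^ 2 < ((π / 2) * Real.sqrt (t / (3 * s))) ^ 2 :=
      pow_lt_pow_left₀ h hIL.le (by norm_num)
    rw [mul_pow, hsq] at h1
    have h1' : IL ^ 2 * (3 * s) < (π / 2) ^ 2 * (t / (3 * s)) * (3 * s) :=
      mul_lt_mul_of_pos_right h1 (by positivity)
    have heq : (π / 2) ^ 2 * (t / (3 * s)) * (3 * s) = t * π ^ 2 / 4 := by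
      field_simp; ring
    rw [heq] at h1'
    have h12 : 12 * s * IL ^ 2 < t * π ^ 2 := by linarith
    have h3u : s < 3 * u := by nlinarith [pow_pos hIL 2]
    intro y hy
    show πF y ≤ πF IL
    rw [hform y, hform IL]
    obtain ⟨hy0, hy1⟩ := hy
    nlinarith [mul_nonneg hu0.le (sq_nonneg (IL - y)),
      mul_nonneg (mul_nonneg (by linarith : (0:ℝ) ≤ 3 * u - s)
        (by linarith : (0:ℝ) ≤ IL + y)) (by linarith : (0:ℝ) ≤ IL - y)]
end
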